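/- Assume a = d ∈ (0,1) (so b = c = 1 − a). Then for every integer N ≥ 2, every integer k with 1 ≤ k ≤ N − 1, and every initial distribution φ = (α, β), the probability P^{(N)}_k(φ) = Σ_{n=1}^{∞} (1,1)·Ξ^{(N)}_k(n)·(α,β)ᵀ of absorption at 0 before reaching N equals ((1 − a)(N − k) + (2a − 1)α) / ((1 − a)N + 2a − 1). -/

import Mathlib

open scoped BigOperators

/-- The matrix `P = [[a, b], [0, 0]]`. -/
noncomputable def Pmat (a b : ℝ) : Matrix (Fin 2) (Fin 2) ℝ := !![a, b; 0, 0]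
/-- The matrix `Q = [[0, 0], [c, d]]`. -/
noncomputable def Qmat (c d : ℝ) : Matrix (Fin 2) (Fin 2) ℝ := !![0, 0; c, d]

/-- Row vector `(1,1)` times a matrix times the column vector `(α, β)ᵀ`. -/
noncomputable def entryPair (M : Matrix (Fin 2) (Fin 2) ℝ) (α β : ℝ) : ℝ :=
  (M 0 0 + M 1 0) * α + (M 0 1 + M 1 1) * β

/-- The position after `j+1` steps of the step sequence `s` started at `k`
(`s i = true` encodes the step `+1`, `s i = false` the step `−1`). -/
def walkPos (k : ℤ) {n : ℕ} (s : Fin n → Bool) (j : Fin n) : ℤ :=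
  k + ∑ i ∈ Finset.univ.filter (fun i : Fin n => i ≤ j), (if s i then (1 : ℤ) else -1)

/-- `XiN Pm Qm N k n = Ξ^{(N)}_k(n)`: the sum, over all step sequences
`(s₁, …, sₙ) ∈ {−1,+1}ⁿ` whose partial positions `k_j = k + s₁ + ⋯ + s_j` satisfy
`0 < k_j < N` for `1 ≤ j ≤ n−1` and `k_n = 0`, of the matrix product `M_{sₙ} ⋯ M_{s₁}`
where `M_{−1} = Pm` and `M_{+1} = Qm`. -/
noncomputable def XiN (Pm Qm : Matrix (Fin 2) (Fin 2) ℝ) (N : ℤ) (k : ℤ) (n : ℕ) :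
    Matrix (Fin 2) (Fin 2) ℝ :=
  ∑ s ∈ Finset.univ.filter (fun s : Fin n → Bool =>
      (∀ j : Fin n, (j : ℕ) < n - 1 → 0 < walkPos k s j ∧ walkPos k s j < N) ∧
      (∀ j : Fin n, (j : ℕ) = n - 1 → walkPos k s j = 0)),
    ((List.ofFn (fun i => if s i then Qm else Pm)).reverse).prod

lemma walkPos_zero (k : ℤ) {n : ℕ} (s : Fin (n+1) → Bool) :
    walkPos k s 0 = k + (if s 0 then 1 else -1) := by
  unfold walkPos
  congr 1
  rw [show (Finset.univ.filter (fun i : Fin (n+1) => i ≤ 0)) = {0} by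
    ext i; simp [Fin.le_zero_iff]]
  simp

lemma walkPos_succ (k : ℤ) {n : ℕ} (b : Bool) (t : Fin n → Bool) (i : Fin n) :
    walkPos k (Fin.cons b t) i.succ = walkPos (k + (if b then 1 else -1)) t i := by
  unfold walkPos
  rw [Finset.sum_filter, Finset.sum_filter, Fin.sum_univ_succ]
  simp only [Fin.cons_zero, Fin.cons_succ, Fin.succ_le_succ_iff, Fin.zero_le, if_true]
  ring

/-- The path condition appearing in `XiN`. -/
def XiCond (N k : ℤ) {n : ℕ} (s : Fin n → Bool) : Prop :=
  (∀ j : Fin n, (j : ℕ) < n - 1 → 0 < walkPos k s j ∧ walkPos k s j < N) ∧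
  (∀ j : Fin n, (j : ℕ) = n - 1 → walkPos k s j = 0)

instance (N k : ℤ) (n : ℕ) : DecidablePred (XiCond N k (n := n)) := by
  intro s; unfold XiCond; infer_instance

lemma XiN_eq (Pm Qm : Matrix (Fin 2) (Fin 2) ℝ) (N k : ℤ) (n : ℕ) :
    XiN Pm Qm N k n = ∑ s : Fin n → Bool, if XiCond N k s then
      ((List.ofFn (fun i => if s i then Qm else Pm)).reverse).prod else 0 := by
  rw [XiN, Finset.sum_filter]
  apply Finset.sum_congr rfl
  intro s _
  congr 1

lemma XiCond_cons (N k : ℤ) {n : ℕ} (hn : 1 ≤ n) (b : Bool) (t : Fin n → Bool) :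
    XiCond N k (Fin.cons b t) ↔
      ((0 < k + (if b then 1 else -1) ∧ k + (if b then 1 else -1) < N) ∧
        XiCond N (k + (if b then 1 else -1)) t) := by
  set e : ℤ := if b then 1 else -1 with he
  constructor
  · rintro ⟨h1, h2⟩
    have h0 : (0 : Fin (n+1)) ≤ 0 := le_refl _
    have hint : 0 < k + e ∧ k + e < N := by
      have := h1 0 (by simp; omega)
      rwa [walkPos_zero, Fin.cons_zero, ← he] at this
    refine ⟨hint, ?_, ?_⟩
    · intro j hj
      have := h1 j.succ (by simp [Fin.val_succ]; omega)
      rwa [walkPos_succ, ← he] at this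
    · intro j hj
      have := h2 j.succ (by simp [Fin.val_succ]; omega)
      rwa [walkPos_succ, ← he] at this
  · rintro ⟨hint, h1, h2⟩
    constructor
    · intro j
      induction j using Fin.cases with
      | zero => intro _; rw [walkPos_zero, Fin.cons_zero, ← he]; exact hint
      | succ i =>
        intro hi
        rw [walkPos_succ, ← he]
        exact h1 i (by simp [Fin.val_succ] at hi; omega)
    · intro j
      induction j using Fin.cases with
      | zero => intro hj; exfalso; revert hj; simp; omega
      | succ i =>
        intro hi
        rw [walkPos_succ, ← he]
        exact h2 i (by simp [Fin.val_succ] at hi; omega)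

lemma prod_reverse_cons {M : Type*} [Monoid M] {n : ℕ} (g : Fin (n+1) → M) :
    ((List.ofFn g).reverse).prod = ((List.ofFn fun i => g i.succ).reverse).prod * g 0 := by
  rw [List.ofFn_succ, List.reverse_cons, List.prod_append, List.prod_cons, List.prod_nil,
    mul_one]

lemma XiN_one (Pm Qm : Matrix (Fin 2) (Fin 2) ℝ) (N k : ℤ) (hk : 1 ≤ k) :
    XiN Pm Qm N k 1 = if k = 1 then Pm else 0 := by
  rw [XiN_eq]
  rw [show (Finset.univ : Finset (Fin 1 → Bool)) = {fun _ => true, fun _ => false} by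
    ext s; simp; by_cases h : s 0 = true
    · left; funext i; rw [Fin.eq_zero i]; simp [h]
    · right; funext i; rw [Fin.eq_zero i]; simp at h; simp [h]]
  rw [Finset.sum_insert (by
    intro hmem; simp at hmem
    have := congrFun hmem 0; simp at this), Finset.sum_singleton]
  have hc1 : XiCond N k (n := 1) (fun _ => true) ↔ False := by
    simp only [XiCond, iff_false]
    rintro ⟨-, h2⟩
    have := h2 0 rfl
    rw [walkPos_zero] at this
    simp at this
    omega
  have hc2 : XiCond N k (n := 1) (fun _ => false) ↔ k = 1 := by
    simp only [XiCond]
    constructor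
    · rintro ⟨-, h2⟩
      have := h2 0 rfl
      rw [walkPos_zero] at this
      simp at this
      omega
    · intro hk1
      refine ⟨by intro j hj; simp at hj, ?_⟩
      intro j hj
      rw [Fin.eq_zero j, walkPos_zero]
      simp
      omega
  rw [if_neg (by rw [hc1]; exact not_false), if_congr hc2 rfl rfl]
  by_cases h : k = 1 <;> simp [h, List.ofFn_succ, List.ofFn_zero]

lemma XiN_succ (Pm Qm : Matrix (Fin 2) (Fin 2) ℝ) (N k : ℤ) (n : ℕ) (hn : 1 ≤ n) :
    XiN Pm Qm N k (n+1) =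
      (if 0 < k-1 ∧ k-1 < N then XiN Pm Qm N (k-1) n else 0) * Pm +
      (if 0 < k+1 ∧ k+1 < N then XiN Pm Qm N (k+1) n else 0) * Qm := by
  rw [XiN_eq]
  rw [← Equiv.sum_comp (Fin.consEquiv (fun _ : Fin (n+1) => Bool))
    (fun s => if XiCond N k s then
      ((List.ofFn (fun i => if s i then Qm else Pm)).reverse).prod else 0)]
  rw [Fintype.sum_prod_type, Fintype.sum_bool]
  have key : ∀ (b : Bool) (t : Fin n → Bool),
      (if XiCond N k (Fin.consEquiv (fun _ : Fin (n+1) => Bool) (b, t)) then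
        ((List.ofFn (fun i => if (Fin.consEquiv (fun _ : Fin (n+1) => Bool) (b, t)) i
           then Qm else Pm)).reverse).prod else 0)
      = (if (0 < k + (if b then 1 else -1) ∧ k + (if b then 1 else -1) < N) ∧
            XiCond N (k + (if b then 1 else -1)) t then
          ((List.ofFn (fun i => if t i then Qm else Pm)).reverse).prod *
            (if b then Qm else Pm) else 0) := by
    intro b t
    have hce : (Fin.consEquiv (fun _ : Fin (n+1) => Bool)) (b, t) = Fin.cons b t := rfl
    rw [hce]
    have hp := prod_reverse_cons (M := Matrix (Fin 2) (Fin 2) ℝ)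
      (fun i : Fin (n+1) => if Fin.cons (α := fun _ => Bool) b t i = true then Qm else Pm)
    rw [hp]
    simp only [XiCond_cons N k hn b t, Fin.cons_zero, Fin.cons_succ]
  rw [Finset.sum_congr rfl (fun t _ => key true t),
      Finset.sum_congr rfl (fun t _ => key false t)]
  have h1 : k + (if true then (1:ℤ) else -1) = k + 1 := by simp
  have h2 : k + (if false then (1:ℤ) else -1) = k - 1 := by simp; ring
  rw [add_comm]
  congr 1
  · -- false / Pm part
    simp only [h2, if_neg (Bool.false_ne_true)]
    by_cases h : 0 < k - 1 ∧ k - 1 < N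
    · rw [if_pos h, XiN_eq, Finset.sum_mul]
      apply Finset.sum_congr rfl
      intro t _
      rw [ite_mul, zero_mul]
      exact if_congr (and_iff_right h) rfl rfl
    · rw [if_neg h, zero_mul]
      apply Finset.sum_eq_zero
      intro t _
      rw [if_neg]
      rintro ⟨hh, -⟩; exact h hh
  · -- true / Qm part
    simp only [h1, if_pos rfl]
    by_cases h : 0 < k + 1 ∧ k + 1 < N
    · rw [if_pos h, XiN_eq, Finset.sum_mul]
      apply Finset.sum_congr rfl
      intro t _
      rw [ite_mul, zero_mul]
      exact if_congr (and_iff_right h) rfl rfl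
    · rw [if_neg h, zero_mul]
      apply Finset.sum_eq_zero
      intro t _
      rw [if_neg]
      rintro ⟨hh, -⟩; exact h hh

section Entry

lemma list_prod_entry_nonneg (l : List (Matrix (Fin 2) (Fin 2) ℝ))
    (hl : ∀ M ∈ l, ∀ i j, 0 ≤ M i j) : ∀ i j, 0 ≤ l.prod i j := by
  induction l with
  | nil => intro i j; simp [Matrix.one_apply]; positivity
  | cons M l ih =>
    intro i j
    rw [List.prod_cons, Matrix.mul_apply]
    apply Finset.sum_nonneg
    intro x _
    exact mul_nonneg (hl M (by simp) i x) (ih (fun M' hM' => hl M' (by simp [hM'])) x j)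

variable {a : ℝ} (ha : 0 < a) (ha1 : a < 1)

lemma XiN_nonneg (ha : 0 ≤ a) (ha1 : a ≤ 1) (N k : ℤ) (n : ℕ) (i j : Fin 2) :
    0 ≤ XiN (Pmat a (1-a)) (Qmat (1-a) a) N k n i j := by
  rw [XiN_eq]
  have : ∀ s : Fin n → Bool, 0 ≤ (if XiCond N k s then
      ((List.ofFn (fun i => if s i then Qmat (1-a) a else Pmat a (1-a))).reverse).prod else 0) i j := by
    intro s
    split
    · apply list_prod_entry_nonneg
      intro M hM i' j'
      simp only [List.mem_reverse, List.mem_ofFn] at hM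
      obtain ⟨x, rfl⟩ := hM
      split <;> (fin_cases i' <;> fin_cases j' <;> simp [Pmat, Qmat] <;> linarith)
    · simp
  calc (0:ℝ) ≤ ∑ s : Fin n → Bool, (if XiCond N k s then
      ((List.ofFn (fun i => if s i then Qmat (1-a) a else Pmat a (1-a))).reverse).prod else 0) i j :=
        Finset.sum_nonneg (fun s _ => this s)
    _ = _ := by rw [Matrix.sum_apply]

lemma entryPair_add (M M' : Matrix (Fin 2) (Fin 2) ℝ) (α β : ℝ) :
    entryPair (M + M') α β = entryPair M α β + entryPair M' α β := by
  simp [entryPair, Matrix.add_apply]; ring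

lemma entryPair_zero (α β : ℝ) : entryPair 0 α β = 0 := by
  simp [entryPair]

lemma entryPair_mul_P (M : Matrix (Fin 2) (Fin 2) ℝ) (p q α β : ℝ) :
    entryPair (M * Pmat p q) α β = (p*α + q*β) * entryPair M 1 0 := by
  simp [entryPair, Pmat, Matrix.mul_apply, Fin.sum_univ_succ]
  ring

lemma entryPair_mul_Q (M : Matrix (Fin 2) (Fin 2) ℝ) (p q α β : ℝ) :
    entryPair (M * Qmat p q) α β = (p*α + q*β) * entryPair M 0 1 := by
  simp [entryPair, Qmat, Matrix.mul_apply, Fin.sum_univ_succ]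
  ring

lemma entryPair_P (p q α β : ℝ) : entryPair (Pmat p q) α β = p*α + q*β := by
  simp [entryPair, Pmat]

lemma entryPair_bilin (M : Matrix (Fin 2) (Fin 2) ℝ) (α β : ℝ) :
    entryPair M α β = α * entryPair M 1 0 + β * entryPair M 0 1 := by
  simp [entryPair]; ring

lemma entryPair_nonneg (M : Matrix (Fin 2) (Fin 2) ℝ) (α β : ℝ)
    (hM : ∀ i j, 0 ≤ M i j) (hα : 0 ≤ α) (hβ : 0 ≤ β) : 0 ≤ entryPair M α β := by
  have := hM 0 0; have := hM 1 0; have := hM 0 1; have := hM 1 1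
  unfold entryPair; positivity

end Entry

section Bound

variable {a : ℝ}

/-- Abbreviation. -/
noncomputable def G (a : ℝ) (N k : ℤ) (n : ℕ) (α β : ℝ) : ℝ :=
  entryPair (XiN (Pmat a (1-a)) (Qmat (1-a) a) N k n) α β

lemma G_nonneg (ha : 0 ≤ a) (ha1 : a ≤ 1) (N k : ℤ) (n : ℕ) {α β : ℝ}
    (hα : 0 ≤ α) (hβ : 0 ≤ β) : 0 ≤ G a N k n α β :=
  entryPair_nonneg _ _ _ (XiN_nonneg ha ha1 N k n) hα hβ

lemma G_one (N k : ℤ) (hk : 1 ≤ k) (α β : ℝ) :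
    G a N k 1 α β = if k = 1 then a*α + (1-a)*β else 0 := by
  unfold G
  rw [XiN_one _ _ _ _ hk]
  split
  · rw [entryPair_P]
  · rw [entryPair_zero]

lemma G_step (N k : ℤ) (n : ℕ) (hn : 1 ≤ n) (α β : ℝ) :
    G a N k (n+1) α β
      = (if 0 < k-1 ∧ k-1 < N then (a*α+(1-a)*β) * G a N (k-1) n 1 0 else 0)
        + (if 0 < k+1 ∧ k+1 < N then ((1-a)*α+a*β) * G a N (k+1) n 0 1 else 0) := by
  unfold G
  rw [XiN_succ _ _ _ _ n hn, entryPair_add]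
  congr 1
  · rw [ite_mul, zero_mul]
    split
    · rw [entryPair_mul_P]
    · rw [entryPair_zero]
  · rw [ite_mul, zero_mul]
    split
    · rw [entryPair_mul_Q]
    · rw [entryPair_zero]

lemma sum_G_le (ha : 0 < a) (ha1 : a < 1) (N : ℤ) (hN : 2 ≤ N) :
    ∀ m : ℕ, ∀ k : ℤ, 1 ≤ k → k ≤ N - 1 → ∀ α β : ℝ, 0 ≤ α → 0 ≤ β → α + β ≤ 1 →
    ∑ n ∈ Finset.range m, G a N k (n+1) α β ≤ 1 := by
  intro m
  induction m with
  | zero => intros; simp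
  | succ m ih =>
    intro k hk hkN α β hα hβ hαβ
    rw [Finset.sum_range_succ']
    rw [Finset.sum_congr rfl (fun n _ => G_step N k (n+1) (Nat.le_add_left 1 n) α β)]
    rw [G_one N k hk]
    rw [Finset.sum_add_distrib]
    have hp : 0 ≤ a*α+(1-a)*β := by nlinarith
    have hq : 0 ≤ (1-a)*α+a*β := by nlinarith
    have hpq : (a*α+(1-a)*β) + ((1-a)*α+a*β) ≤ 1 := by linarith
    by_cases hc1 : 0 < k-1 ∧ k-1 < N
    · have hk1 : ¬ (k = 1) := by omega
      have hS1 : ∑ n ∈ Finset.range m, G a N (k-1) (n+1) 1 0 ≤ 1 :=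
        ih (k-1) (by omega) (by omega) 1 0 (by norm_num) le_rfl (by norm_num)
      have hS1' : (0:ℝ) ≤ ∑ n ∈ Finset.range m, G a N (k-1) (n+1) 1 0 :=
        Finset.sum_nonneg fun n _ => G_nonneg ha.le ha1.le _ _ _ (by norm_num) le_rfl
      simp only [if_pos hc1, if_neg hk1, ← Finset.mul_sum]
      by_cases hc2 : 0 < k+1 ∧ k+1 < N
      · have hS2 : ∑ n ∈ Finset.range m, G a N (k+1) (n+1) 0 1 ≤ 1 :=
          ih (k+1) (by omega) (by omega) 0 1 le_rfl (by norm_num) (by norm_num)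
        have hS2' : (0:ℝ) ≤ ∑ n ∈ Finset.range m, G a N (k+1) (n+1) 0 1 :=
          Finset.sum_nonneg fun n _ => G_nonneg ha.le ha1.le _ _ _ le_rfl (by norm_num)
        simp only [if_pos hc2, ← Finset.mul_sum]
        nlinarith
      · simp only [if_neg hc2, Finset.sum_const_zero]
        nlinarith
    · have hk1 : k = 1 := by omega
      simp only [if_neg hc1, Finset.sum_const_zero, if_pos hk1]
      by_cases hc2 : 0 < k+1 ∧ k+1 < N
      · have hS2 : ∑ n ∈ Finset.range m, G a N (k+1) (n+1) 0 1 ≤ 1 :=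
          ih (k+1) (by omega) (by omega) 0 1 le_rfl (by norm_num) (by norm_num)
        have hS2' : (0:ℝ) ≤ ∑ n ∈ Finset.range m, G a N (k+1) (n+1) 0 1 :=
          Finset.sum_nonneg fun n _ => G_nonneg ha.le ha1.le _ _ _ le_rfl (by norm_num)
        simp only [if_pos hc2, ← Finset.mul_sum]
        nlinarith
      · simp only [if_neg hc2, Finset.sum_const_zero]
        nlinarith

lemma summable_G (ha : 0 < a) (ha1 : a < 1) (N : ℤ) (hN : 2 ≤ N) (k : ℤ)
    (hk : 1 ≤ k) (hkN : k ≤ N - 1) {α β : ℝ} (hα : 0 ≤ α) (hβ : 0 ≤ β) (hαβ : α + β ≤ 1) :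
    Summable (fun n : ℕ => G a N k (n+1) α β) := by
  apply summable_of_sum_range_le (c := 1)
  · intro n; exact G_nonneg ha.le ha1.le _ _ _ hα hβ
  · intro n; exact sum_G_le ha ha1 N hN n k hk hkN α β hα hβ hαβ

end Bound

section Eqs

variable {a : ℝ}

noncomputable def Xv (a : ℝ) (N k : ℤ) : ℝ := ∑' n : ℕ, G a N k (n+1) 1 0
noncomputable def Yv (a : ℝ) (N k : ℤ) : ℝ := ∑' n : ℕ, G a N k (n+1) 0 1

lemma tsum_ite_mul (c : Prop) [Decidable c] (r : ℝ) (f : ℕ → ℝ)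
    (hf : c → Summable f) :
    ∑' n, (if c then r * f n else 0) = if c then r * ∑' n, f n else 0 := by
  by_cases hc : c
  · simp only [if_pos hc]; exact tsum_mul_left
  · simp only [if_neg hc, tsum_zero]

lemma summable_ite_mul (c : Prop) [Decidable c] (r : ℝ) (f : ℕ → ℝ)
    (hf : c → Summable f) : Summable (fun n => if c then r * f n else 0) := by
  by_cases hc : c
  · simp only [if_pos hc]; exact (hf hc).mul_left r
  · simp only [if_neg hc]; exact summable_zero

lemma Xv_eq (ha : 0 < a) (ha1 : a < 1) (N : ℤ) (hN : 2 ≤ N) (k : ℤ)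
    (hk : 1 ≤ k) (hkN : k ≤ N-1) :
    Xv a N k = a * (if k = 1 then 1 else Xv a N (k-1))
      + (1-a) * (if k = N-1 then 0 else Yv a N (k+1)) := by
  have hs : Summable (fun n : ℕ => G a N k (n+1) 1 0) :=
    summable_G ha ha1 N hN k hk hkN (by norm_num) le_rfl (by norm_num)
  have hstep : ∀ n : ℕ, G a N k (n+1+1) 1 0
      = (if 0 < k-1 ∧ k-1 < N then a * G a N (k-1) (n+1) 1 0 else 0)
        + (if 0 < k+1 ∧ k+1 < N then (1-a) * G a N (k+1) (n+1) 0 1 else 0) := by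
    intro n
    rw [G_step N k (n+1) (Nat.le_add_left 1 n) 1 0]
    norm_num
  have hsum1 : Summable (fun n : ℕ => if 0 < k-1 ∧ k-1 < N then a * G a N (k-1) (n+1) 1 0 else 0) :=
    summable_ite_mul _ _ _ (fun hc => summable_G ha ha1 N hN (k-1) (by omega) (by omega)
      (by norm_num) le_rfl (by norm_num))
  have hsum2 : Summable (fun n : ℕ => if 0 < k+1 ∧ k+1 < N then (1-a) * G a N (k+1) (n+1) 0 1 else 0) :=
    summable_ite_mul _ _ _ (fun hc => summable_G ha ha1 N hN (k+1) (by omega) (by omega)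
      le_rfl (by norm_num) (by norm_num))
  unfold Xv
  rw [Summable.tsum_eq_zero_add hs, G_one N k hk, tsum_congr hstep, Summable.tsum_add hsum1 hsum2,
    tsum_ite_mul _ _ _ (fun hc => summable_G ha ha1 N hN (k-1) (by omega) (by omega)
      (by norm_num) le_rfl (by norm_num)),
    tsum_ite_mul _ _ _ (fun hc => summable_G ha ha1 N hN (k+1) (by omega) (by omega)
      le_rfl (by norm_num) (by norm_num))]
  have hc1 : (0 < k-1 ∧ k-1 < N) ↔ ¬ (k = 1) := by omega
  have hc2 : (0 < k+1 ∧ k+1 < N) ↔ ¬ (k = N-1) := by omega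
  rw [if_congr hc1 rfl rfl, if_congr hc2 rfl rfl, ite_not, ite_not]
  have ex : ∀ j : ℤ, (∑' n : ℕ, G a N j (n+1) 1 0) = Xv a N j := fun _ => rfl
  have ey : ∀ j : ℤ, (∑' n : ℕ, G a N j (n+1) 0 1) = Yv a N j := fun _ => rfl
  rw [ex, ey]
  by_cases h1 : k = 1
  · by_cases h2 : k = N - 1
    · simp only [if_pos h1, if_pos h2]; ring
    · simp only [if_pos h1, if_neg h2]; ring
  · by_cases h2 : k = N - 1
    · simp only [if_neg h1, if_pos h2]; ring
    · simp only [if_neg h1, if_neg h2]; ring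

lemma Yv_eq (ha : 0 < a) (ha1 : a < 1) (N : ℤ) (hN : 2 ≤ N) (k : ℤ)
    (hk : 1 ≤ k) (hkN : k ≤ N-1) :
    Yv a N k = (1-a) * (if k = 1 then 1 else Xv a N (k-1))
      + a * (if k = N-1 then 0 else Yv a N (k+1)) := by
  have hs : Summable (fun n : ℕ => G a N k (n+1) 0 1) :=
    summable_G ha ha1 N hN k hk hkN le_rfl (by norm_num) (by norm_num)
  have hstep : ∀ n : ℕ, G a N k (n+1+1) 0 1
      = (if 0 < k-1 ∧ k-1 < N then (1-a) * G a N (k-1) (n+1) 1 0 else 0)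
        + (if 0 < k+1 ∧ k+1 < N then a * G a N (k+1) (n+1) 0 1 else 0) := by
    intro n
    rw [G_step N k (n+1) (Nat.le_add_left 1 n) 0 1]
    norm_num
  have hsum1 : Summable (fun n : ℕ => if 0 < k-1 ∧ k-1 < N then (1-a) * G a N (k-1) (n+1) 1 0 else 0) :=
    summable_ite_mul _ _ _ (fun hc => summable_G ha ha1 N hN (k-1) (by omega) (by omega)
      (by norm_num) le_rfl (by norm_num))
  have hsum2 : Summable (fun n : ℕ => if 0 < k+1 ∧ k+1 < N then a * G a N (k+1) (n+1) 0 1 else 0) :=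
    summable_ite_mul _ _ _ (fun hc => summable_G ha ha1 N hN (k+1) (by omega) (by omega)
      le_rfl (by norm_num) (by norm_num))
  unfold Yv
  rw [Summable.tsum_eq_zero_add hs, G_one N k hk, tsum_congr hstep, Summable.tsum_add hsum1 hsum2,
    tsum_ite_mul _ _ _ (fun hc => summable_G ha ha1 N hN (k-1) (by omega) (by omega)
      (by norm_num) le_rfl (by norm_num)),
    tsum_ite_mul _ _ _ (fun hc => summable_G ha ha1 N hN (k+1) (by omega) (by omega)
      le_rfl (by norm_num) (by norm_num))]
  have hc1 : (0 < k-1 ∧ k-1 < N) ↔ ¬ (k = 1) := by omega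
  have hc2 : (0 < k+1 ∧ k+1 < N) ↔ ¬ (k = N-1) := by omega
  rw [if_congr hc1 rfl rfl, if_congr hc2 rfl rfl, ite_not, ite_not]
  have ex : ∀ j : ℤ, (∑' n : ℕ, G a N j (n+1) 1 0) = Xv a N j := fun _ => rfl
  have ey : ∀ j : ℤ, (∑' n : ℕ, G a N j (n+1) 0 1) = Yv a N j := fun _ => rfl
  rw [ex, ey]
  by_cases h1 : k = 1
  · by_cases h2 : k = N - 1
    · simp only [if_pos h1, if_pos h2]; ring
    · simp only [if_pos h1, if_neg h2]; ring
  · by_cases h2 : k = N - 1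
    · simp only [if_neg h1, if_pos h2]; ring
    · simp only [if_neg h1, if_neg h2]; ring

end Eqs

section Solve

variable {a : ℝ}

lemma Xv_Yv_value (ha : 0 < a) (ha1 : a < 1) (N : ℤ) (hN : 2 ≤ N) :
    ∀ k : ℤ, 1 ≤ k → k ≤ N - 1 →
      Xv a N k = ((1-a)*((N:ℝ)-(k:ℝ)) + (2*a-1)) / ((1-a)*(N:ℝ) + 2*a - 1) ∧
      Yv a N k = (1-a)*((N:ℝ)-(k:ℝ)) / ((1-a)*(N:ℝ) + 2*a - 1) := by
  have hNr : (2:ℝ) ≤ (N:ℝ) := by exact_mod_cast hN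
  set D : ℝ := (1-a)*(N:ℝ) + 2*a - 1 with hD
  have hDpos : 0 < D := by nlinarith
  set u : ℤ → ℝ := fun j => (if j = 0 then 1 else Xv a N j)
    - ((1-a)*((N:ℝ)-(j:ℝ)) + (2*a-1))/D with hu
  set v : ℤ → ℝ := fun j => (if j = N then 0 else Yv a N j)
    - (1-a)*((N:ℝ)-(j:ℝ))/D with hv
  have hu0 : u 0 = 0 := by
    simp only [hu, if_pos rfl, ↓reduceIte, Int.cast_zero, sub_zero]
    field_simp
    rw [hD]; ring
  have hvN : v N = 0 := by
    simp only [hv, if_pos rfl]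
    simp
  have hE1 : ∀ k : ℤ, 1 ≤ k → k ≤ N-1 → u k = a * u (k-1) + (1-a) * v (k+1) := by
    intro k hk hkN
    have hx := Xv_eq ha ha1 N hN k hk hkN
    simp only [hu, hv]
    rw [if_neg (by omega : ¬ k = 0),
      if_congr (by omega : k-1 = 0 ↔ k = 1) rfl rfl,
      if_congr (by omega : k+1 = N ↔ k = N-1) rfl rfl, hx]
    set A := (if k = 1 then (1:ℝ) else Xv a N (k-1)) with hA
    set B := (if k = N-1 then (0:ℝ) else Yv a N (k+1)) with hB
    push_cast
    field_simp
    ring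
  have hE2 : ∀ k : ℤ, 1 ≤ k → k ≤ N-1 → v k = (1-a) * u (k-1) + a * v (k+1) := by
    intro k hk hkN
    have hy := Yv_eq ha ha1 N hN k hk hkN
    simp only [hu, hv]
    rw [if_neg (by omega : ¬ k = N),
      if_congr (by omega : k-1 = 0 ↔ k = 1) rfl rfl,
      if_congr (by omega : k+1 = N ↔ k = N-1) rfl rfl, hy]
    set A := (if k = 1 then (1:ℝ) else Xv a N (k-1)) with hA
    set B := (if k = N-1 then (0:ℝ) else Yv a N (k+1)) with hB
    push_cast
    field_simp
    ring
  have hrec : ∀ k : ℤ, 2 ≤ k → k ≤ N-1 → u k = 2 * u (k-1) - u (k-2) := by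
    intro k hk2 hkN
    have h1 := hE1 (k-1) (by omega) (by omega)
    rw [show k-1-1 = k-2 from by ring, show k-1+1 = k from by ring] at h1
    have h2 := hE2 k (by omega) hkN
    have h3 := hE1 k (by omega) hkN
    have key : a * (u k - 2*u (k-1) + u (k-2)) = 0 := by
      linear_combination a*h3 - (1-a)*h2 - h1
    rcases mul_eq_zero.mp key with h | h
    · exact absurd h ha.ne'
    · linarith
  have hlin : ∀ m : ℕ, (m:ℤ) ≤ N - 1 → u (m:ℤ) = (m:ℝ) * u 1 := by
    intro m
    induction m using Nat.strong_induction_on with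
    | _ m ih =>
      match m with
      | 0 => intro _; simpa using hu0
      | 1 => intro _; simp
      | (m+2) =>
        intro hm
        have hm' : (m:ℤ) + 2 ≤ N - 1 := by push_cast at hm; omega
        have e1 := ih (m+1) (by omega) (by push_cast; omega)
        have e0 := ih m (by omega) (by omega)
        have hr := hrec ((m:ℤ)+2) (by omega) hm'
        rw [show ((m:ℤ)+2) - 1 = ((m:ℤ)+1) from by ring,
            show ((m:ℤ)+2) - 2 = (m:ℤ) from by ring] at hr
        push_cast at hr e1 e0 ⊢
        rw [hr, e1, e0]; ring
  -- u 1 = 0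
  have hu1 : u 1 = 0 := by
    have htop := hE1 (N-1) (by omega) le_rfl
    rw [show N-1+1 = N from by ring, hvN, mul_zero, add_zero,
      show N-1-1 = N-2 from by ring] at htop
    have hm1 : (((N-1).toNat : ℤ)) = N - 1 := Int.toNat_of_nonneg (by omega)
    have hm2 : (((N-2).toNat : ℤ)) = N - 2 := Int.toNat_of_nonneg (by omega)
    have l1 := hlin (N-1).toNat (by omega)
    have l2 := hlin (N-2).toNat (by omega)
    rw [hm1] at l1
    rw [hm2] at l2
    have c1 : (((N-1).toNat : ℕ) : ℝ) = (N:ℝ) - 1 := by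
      have := congrArg (fun z : ℤ => (z:ℝ)) hm1
      push_cast at this
      linarith
    have c2 : (((N-2).toNat : ℕ) : ℝ) = (N:ℝ) - 2 := by
      have := congrArg (fun z : ℤ => (z:ℝ)) hm2
      push_cast at this
      linarith
    rw [c1] at l1
    rw [c2] at l2
    rw [l1, l2] at htop
    have hfac : ((N:ℝ)-1) - a*((N:ℝ)-2) > 0 := by nlinarith
    have : u 1 * (((N:ℝ)-1) - a*((N:ℝ)-2)) = 0 := by linear_combination htop
    rcases mul_eq_zero.mp this with h | h
    · exact h
    · exact absurd h hfac.ne'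
  have huz : ∀ j : ℤ, 0 ≤ j → j ≤ N - 1 → u j = 0 := by
    intro j hj hjN
    have hmj : ((j.toNat : ℤ)) = j := Int.toNat_of_nonneg hj
    have := hlin j.toNat (by omega)
    rw [hmj, hu1, mul_zero] at this
    exact this
  have hvz : ∀ j : ℤ, 2 ≤ j → j ≤ N → v j = 0 := by
    intro j hj hjN
    have h1 := hE1 (j-1) (by omega) (by omega)
    rw [show j-1+1 = j from by ring] at h1
    rw [huz (j-1) (by omega) (by omega), huz (j-1-1) (by omega) (by omega)] at h1
    have : (1-a) * v j = 0 := by linarith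
    rcases mul_eq_zero.mp this with h | h
    · exact absurd h (by linarith : (1:ℝ)-a ≠ 0)
    · exact h
  have hv1 : ∀ j : ℤ, 1 ≤ j → j ≤ N → v j = 0 := by
    intro j hj hjN
    rcases eq_or_lt_of_le hj with h | h
    · have e0 : u (1-1) = 0 := huz (1-1) (by omega) (by omega)
      have e2 : v (1+1) = 0 := hvz (1+1) (by omega) (by omega)
      have h2 := hE2 1 le_rfl (by omega)
      rw [e0, e2, mul_zero, mul_zero, add_zero] at h2
      rw [← h]; exact h2
    · exact hvz j (by omega) hjN
  intro k hk hkN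
  constructor
  · have := huz k (by omega) hkN
    simp only [hu, if_neg (by omega : ¬ k = 0)] at this
    linarith
  · have := hv1 k hk (by omega)
    simp only [hv, if_neg (by omega : ¬ k = N)] at this
    linarith

end Solve

/-- Theorem 11: for `a = d ∈ (0,1)` (so `b = c = 1 − a`), the probability
`P^{(N)}_k(φ) = Σ_{n=1}^∞ (1,1)·Ξ^{(N)}_k(n)·(α,β)ᵀ` of absorption at `0` before reaching
`N` equals `((1−a)(N−k) + (2a−1)α)/((1−a)N + 2a − 1)` for every `N ≥ 2`, `1 ≤ k ≤ N−1`
and every initial distribution `φ = (α, β)`. -/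
theorem absorption_two_boundaries (a : ℝ) (ha : 0 < a) (ha1 : a < 1)
    (N k : ℤ) (hN : 2 ≤ N) (hk : 1 ≤ k) (hkN : k ≤ N - 1)
    (α β : ℝ) (hα : 0 ≤ α) (hβ : 0 ≤ β) (hαβ : α + β = 1) :
    ∑' n : ℕ, entryPair (XiN (Pmat a (1 - a)) (Qmat (1 - a) a) N k (n + 1)) α β =
      ((1 - a) * ((N : ℝ) - (k : ℝ)) + (2 * a - 1) * α) /
        ((1 - a) * (N : ℝ) + 2 * a - 1) := by
  obtain ⟨hX, hY⟩ := Xv_Yv_value ha ha1 N hN k hk hkN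
  have hNr : (2:ℝ) ≤ (N:ℝ) := by exact_mod_cast hN
  have hD : 0 < (1 - a) * (N:ℝ) + 2 * a - 1 := by nlinarith
  have hGb : ∀ n : ℕ, entryPair (XiN (Pmat a (1 - a)) (Qmat (1 - a) a) N k (n + 1)) α β
      = α * G a N k (n+1) 1 0 + β * G a N k (n+1) 0 1 := by
    intro n
    exact entryPair_bilin _ _ _
  rw [tsum_congr hGb]
  have hs1 : Summable (fun n : ℕ => α * G a N k (n+1) 1 0) :=
    (summable_G ha ha1 N hN k hk hkN (by norm_num) le_rfl (by norm_num)).mul_left α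
  have hs2 : Summable (fun n : ℕ => β * G a N k (n+1) 0 1) :=
    (summable_G ha ha1 N hN k hk hkN le_rfl (by norm_num) (by norm_num)).mul_left β
  rw [Summable.tsum_add hs1 hs2, tsum_mul_left, tsum_mul_left]
  have ex : (∑' n : ℕ, G a N k (n+1) 1 0) = Xv a N k := rfl
  have ey : (∑' n : ℕ, G a N k (n+1) 0 1) = Yv a N k := rfl
  rw [ex, ey, hX, hY]
  have hβ' : β = 1 - α := by linarith
  subst hβ'
  field_simp
  ring
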